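/- Let V be a real Banach space, H a real Hilbert space, e : V → H a continuous linear map, and j : V → V* defined by j(x)(v) := (e v, e x)_H. Let a < b be reals, p ∈ [2, ∞), and let A : [a, b] × V → V* be such that for each x ∈ V the map s ↦ A(s, x) is Bochner integrable on [a, b]. Let λ, K₁, K̄₁ : [a, b] → [0, ∞) be Lebesgue integrable and suppose that for almost every s ∈ [a, b] and all x ∈ V: 2⟨x, A(s, x)⟩ + λ(s)‖x‖_V^p ≤ K₁(s)‖e x‖_H² + K̄₁(s). Define D(x) := j(x) − ∫_a^b A(s, x) ds. Then for all x ∈ V: ⟨D(x), x⟩ ≥ (1/2)(∫_a^b λ(s) ds) ‖x‖_V^p − (1/2)∫_a^b K̄₁(s) ds + (1 − (1/2)∫_a^b K₁(s) ds) ‖e x‖_H². -/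

import Mathlib

open MeasureTheory

/-- Coercivity of the operator `D(x) = j(x) − ∫_a^b A(s,x) ds` arising in the implicit
time-discretization scheme (proof of Theorem 2.7). -/
theorem stmt_10
    {V H : Type*} [NormedAddCommGroup V] [NormedSpace ℝ V]
    [NormedAddCommGroup H] [InnerProductSpace ℝ H]
    (e : V →L[ℝ] H)
    (j : V → V →L[ℝ] ℝ) (hj : ∀ x v : V, j x v = (inner ℝ (e v) (e x) : ℝ))
    (a b : ℝ) (hab : a < b) (p : ℝ) (hp : 2 ≤ p)
    (A : ℝ → V → V →L[ℝ] ℝ)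
    (hint : ∀ x : V, IntegrableOn (fun s => A s x) (Set.Icc a b))
    (lam K₁ K₁' : ℝ → ℝ)
    (hlam_nonneg : ∀ s, 0 ≤ lam s) (hK₁_nonneg : ∀ s, 0 ≤ K₁ s)
    (hK₁'_nonneg : ∀ s, 0 ≤ K₁' s)
    (hlam_int : IntegrableOn lam (Set.Icc a b))
    (hK₁_int : IntegrableOn K₁ (Set.Icc a b))
    (hK₁'_int : IntegrableOn K₁' (Set.Icc a b))
    (hcoer : ∀ᵐ s ∂(volume.restrict (Set.Icc a b)), ∀ x : V,
      2 * A s x x + lam s * ‖x‖ ^ p ≤ K₁ s * ‖e x‖ ^ 2 + K₁' s) :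
    ∀ x : V,
      (1 / 2) * (∫ s in Set.Icc a b, lam s) * ‖x‖ ^ p
          - (1 / 2) * (∫ s in Set.Icc a b, K₁' s)
          + (1 - (1 / 2) * ∫ s in Set.Icc a b, K₁ s) * ‖e x‖ ^ 2 ≤
        (j x - ∫ s in Set.Icc a b, A s x) x := by
  intro x
  have happly : (∫ s in Set.Icc a b, A s x) x = ∫ s in Set.Icc a b, A s x x :=
    ContinuousLinearMap.integral_apply (hint x) x
  have hAint : IntegrableOn (fun s => A s x x) (Set.Icc a b) :=
    (hint x).apply_continuousLinearMap x
  have hg : IntegrableOn (fun s => (1 / 2) * (K₁ s * (‖e x‖ ^ 2) + K₁' s - lam s * (‖x‖ ^ p)))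
      (Set.Icc a b) :=
    (((hK₁_int.mul_const (‖e x‖ ^ 2)).add hK₁'_int).sub (hlam_int.mul_const (‖x‖ ^ p))).const_mul (1 / 2)
  have hmono : ∫ s in Set.Icc a b, A s x x ≤
      ∫ s in Set.Icc a b, (1 / 2) * (K₁ s * (‖e x‖ ^ 2) + K₁' s - lam s * (‖x‖ ^ p)) := by
    refine integral_mono_ae hAint hg ?_
    filter_upwards [hcoer] with s hs
    have := hs x
    linarith [this]
  have hval : ∫ s in Set.Icc a b, (1 / 2) * (K₁ s * (‖e x‖ ^ 2) + K₁' s - lam s * (‖x‖ ^ p))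
      = (1 / 2) * ((∫ s in Set.Icc a b, K₁ s) * (‖e x‖ ^ 2) + (∫ s in Set.Icc a b, K₁' s)
          - (∫ s in Set.Icc a b, lam s) * (‖x‖ ^ p)) := by
    have h1 : IntegrableOn (fun s => K₁ s * ‖e x‖ ^ 2 + K₁' s) (Set.Icc a b) :=
      (hK₁_int.mul_const (‖e x‖ ^ 2)).add hK₁'_int
    have h2 : IntegrableOn (fun s => lam s * ‖x‖ ^ p) (Set.Icc a b) :=
      hlam_int.mul_const (‖x‖ ^ p)
    have h3 : IntegrableOn (fun s => K₁ s * ‖e x‖ ^ 2) (Set.Icc a b) :=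
      hK₁_int.mul_const (‖e x‖ ^ 2)
    rw [integral_const_mul, integral_sub h1 h2, integral_add h3 hK₁'_int,
      integral_mul_const, integral_mul_const]
  have hjx : j x x = (‖e x‖ ^ 2) := by
    rw [hj x x, real_inner_self_eq_norm_sq]
  have : (j x - ∫ s in Set.Icc a b, A s x) x = (‖e x‖ ^ 2) - ∫ s in Set.Icc a b, A s x x := by
    rw [ContinuousLinearMap.sub_apply, hjx, happly]
  rw [this]
  linarith [hmono, hval.symm ▸ hmono]
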